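/- Hennessy–Milner theorem for first-order modal ξ-calculus: if M and N are image-finite genealogical Kripke models, s ∈ S_M, t ∈ S_N, and for every FOMC-sentence φ one has M,s ⊨ φ if and only if N,t ⊨ φ, then the pointed models (M,s) and (N,t) are bisimilar. -/

import Mathlib

set_option linter.unusedVariables false

/-! Genealogical Kripke models and first-order modal ξ-calculus (FOMC). -/

/-- A genealogical Kripke model over a fixed type `W` of possible worlds,
propositional letters `P` and constant symbols `C`.  The children models are
given by an index type `ι` with a family `child : ι → GKM W P C`. -/
inductive GKM (W P C : Type) : Type 1 where
  | mk (S : Set W) (Sne : S.Nonempty) (R : W → W → Prop) (V : P → Set W)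
      (ι : Type) (child : ι → GKM W P C)
      (I : W → C → Option ι) (T : W → ι → W) : GKM W P C

namespace GKM

variable {W P C : Type}

def S : GKM W P C → Set W
  | .mk S _ _ _ _ _ _ _ => S

def R : GKM W P C → W → W → Prop
  | .mk _ _ R _ _ _ _ _ => R

def V : GKM W P C → P → Set W
  | .mk _ _ _ V _ _ _ _ => V

/-- The index type of the set of children models. -/
def Idx : GKM W P C → Type
  | .mk _ _ _ _ ι _ _ _ => ι

def child : (M : GKM W P C) → M.Idx → GKM W P C
  | .mk _ _ _ _ _ c _ _ => c

def I : (M : GKM W P C) → W → C → Option M.Idx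
  | .mk _ _ _ _ _ _ I _ => I

def T : (M : GKM W P C) → W → M.Idx → W
  | .mk _ _ _ _ _ _ _ T => T

/-- `IsChild M' M` : `M'` is a member of the set `N_M` of children models of `M`. -/
def IsChild (M' M : GKM W P C) : Prop := ∃ a, M.child a = M'

theorem acc_isChild (M : GKM W P C) : Acc IsChild M := by
  induction M with
  | mk S ne R V ι c I T ih =>
    refine Acc.intro _ fun M' h => ?_
    obtain ⟨a, ha⟩ := h
    subst ha
    exact ih a

theorem isChild_wf : WellFounded (@IsChild W P C) := ⟨acc_isChild⟩

instance : WellFoundedRelation (GKM W P C) :=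
  ⟨Relation.TransGen IsChild, isChild_wf.transGen⟩

/-- Hereditary well-formedness: `R ⊆ S × S` and `T(s,N') ∈ S_{N'}`, recursively. -/
def WF (M : GKM W P C) : Prop :=
  (∀ u u', M.R u u' → u ∈ M.S ∧ u' ∈ M.S) ∧
  (∀ s ∈ M.S, ∀ a : M.Idx, M.T s a ∈ (M.child a).S) ∧
  (∀ a : M.Idx, WF (M.child a))
termination_by M
decreasing_by exact Relation.TransGen.single ⟨_, rfl⟩

/-- Finitely many children, hereditarily. -/
def ChildFin (M : GKM W P C) : Prop :=
  Finite M.Idx ∧ ∀ a : M.Idx, ChildFin (M.child a)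
termination_by M
decreasing_by exact Relation.TransGen.single ⟨_, rfl⟩

/-- Image-finite genealogical Kripke model. -/
def ImageFinite (M : GKM W P C) : Prop :=
  (∀ s ∈ M.S, {t | M.R s t}.Finite) ∧ Finite M.Idx ∧
    ∀ a : M.Idx, ImageFinite (M.child a)
termination_by M
decreasing_by exact Relation.TransGen.single ⟨_, rfl⟩

end GKM

/-- Formulas of first-order modal ξ-calculus.  Model variables and formula
variables are both encoded as natural numbers (in separate namespaces).
`qmv φ x` is `¿φ?x`, `qmc φ c` is `¿φ?c`, `all x φ` is `∀x.φ` and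
`xi X φ` is `ξX.φ`. -/
inductive Fm (P C : Type) : Type where
  | fvar : ℕ → Fm P C
  | top : Fm P C
  | prop : P → Fm P C
  | qmv : Fm P C → ℕ → Fm P C
  | qmc : Fm P C → C → Fm P C
  | neg : Fm P C → Fm P C
  | and : Fm P C → Fm P C → Fm P C
  | box : Fm P C → Fm P C
  | all : ℕ → Fm P C → Fm P C
  | xi : ℕ → Fm P C → Fm P C

namespace Fm

variable {P C : Type}

/-- `∃x.φ := ¬∀x.¬φ`. -/
def exi (x : ℕ) (φ : Fm P C) : Fm P C := .neg (.all x (.neg φ))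

/-- `◇φ := ¬□¬φ`. -/
def dia (φ : Fm P C) : Fm P C := .neg (.box (.neg φ))

/-- Free model variables. -/
def fmv : Fm P C → Finset ℕ
  | .fvar _ => ∅
  | .top => ∅
  | .prop _ => ∅
  | .qmv φ x => fmv φ ∪ {x}
  | .qmc φ _ => fmv φ
  | .neg φ => fmv φ
  | .and φ ψ => fmv φ ∪ fmv ψ
  | .box φ => fmv φ
  | .all x φ => fmv φ \ {x}
  | .xi _ φ => fmv φ

/-- Formula variables with a free occurrence *outside* every `¿ ?` pair.
Such occurrences are never bound by `ξ`. -/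
def ffvOut : Fm P C → Finset ℕ
  | .fvar X => {X}
  | .top => ∅
  | .prop _ => ∅
  | .qmv _ _ => ∅
  | .qmc _ _ => ∅
  | .neg φ => ffvOut φ
  | .and φ ψ => ffvOut φ ∪ ffvOut ψ
  | .box φ => ffvOut φ
  | .all _ φ => ffvOut φ
  | .xi _ φ => ffvOut φ

/-- Formula variables with a free occurrence *inside* some `¿ ?` pair
(these are the occurrences a surrounding `ξX.` can bind). -/
def ffvIn : Fm P C → Finset ℕ
  | .fvar _ => ∅
  | .top => ∅
  | .prop _ => ∅
  | .qmv φ _ => ffvOut φ ∪ ffvIn φ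
  | .qmc φ _ => ffvOut φ ∪ ffvIn φ
  | .neg φ => ffvIn φ
  | .and φ ψ => ffvIn φ ∪ ffvIn ψ
  | .box φ => ffvIn φ
  | .all _ φ => ffvIn φ
  | .xi X φ => ffvIn φ \ {X}

/-- Free formula variables. -/
def ffv (φ : Fm P C) : Finset ℕ := ffvOut φ ∪ ffvIn φ

/-- The extra subformula conditions of Definition 2.3. -/
def Good : Fm P C → Prop
  | .fvar _ => True
  | .top => True
  | .prop _ => True
  | .qmv φ _ => fmv φ = ∅ ∧ Good φ
  | .qmc φ _ => fmv φ = ∅ ∧ Good φ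
  | .neg φ => Good φ
  | .and φ ψ => Good φ ∧ Good ψ
  | .box φ => Good φ
  | .all _ φ => Good φ
  | .xi X φ => fmv (Fm.xi X φ) = ∅ ∧ ffv (Fm.xi X φ) = ∅ ∧ Good φ

/-- FOMC-sentences (Definition 2.3). -/
def IsSentence (φ : Fm P C) : Prop := fmv φ = ∅ ∧ ffv φ = ∅ ∧ Good φ

end Fm

namespace GKM

variable {W P C : Type}

mutual

/-- Semantics (Definition 2.11).  `i` interprets model variables as children
models of the current model (via their indices), and `j` interprets formula
variables semantically, as maps assigning to each genealogical Kripke model a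
set of worlds. -/
def eval : (φ : Fm P C) → (M : GKM W P C) → (ℕ → Option M.Idx) →
    (ℕ → Option (GKM W P C → Set W)) → Set W
  | .fvar X, M, _, j => M.S ∩ ((j X).elim ∅ fun F => F M)
  | .top, M, _, _ => M.S
  | .prop p, M, _, _ => M.S ∩ M.V p
  | .qmv φ x, M, i, j =>
      {s | s ∈ M.S ∧ ∃ a, i x = some a ∧
        M.T s a ∈ eval φ (M.child a) (fun _ => none) j}
  | .qmc φ c, M, _, j =>
      {s | s ∈ M.S ∧ ∃ a, M.I s c = some a ∧
        M.T s a ∈ eval φ (M.child a) (fun _ => none) j}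
  | .neg φ, M, i, j => M.S \ eval φ M i j
  | .and φ ψ, M, i, j => eval φ M i j ∩ eval ψ M i j
  | .box φ, M, i, j => {s | s ∈ M.S ∧ ∀ t, M.R s t → t ∈ eval φ M i j}
  | .all x φ, M, i, j =>
      {s | s ∈ M.S ∧ ∀ a : M.Idx, s ∈ eval φ M (Function.update i x (some a)) j}
  | .xi X φ, M, i, j => eval φ M i (Function.update j X (some (fun N => xiClosure φ X j N)))
  termination_by φ M i j => (sizeOf φ, 1)

/-- The semantic value bound to `X` by `ξX.φ` under environment `j`: the
(depth-guarded) fixed point `F` with `F N = ⟦φ⟧^N_{∅, j[X:=F]}`. -/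
def xiClosure (φ : Fm P C) (X : ℕ) (j : ℕ → Option (GKM W P C → Set W))
    (N₀ : GKM W P C) : Set W :=
  WellFounded.fix (isChild_wf.transGen)
    (fun N rec =>
      eval φ N (fun _ => none) (Function.update j X (some fun N' =>
        @dite (Set W) (Relation.TransGen IsChild N' N) (Classical.dec _)
          (fun h => rec N' h) (fun _ => ∅))))
    N₀
  termination_by (sizeOf φ, 2)

end

/-- `M,s ⊨ φ` : truth of the FOMC-sentence `φ` at the pointed model `M,s`. -/
def Sat (M : GKM W P C) (s : W) (φ : Fm P C) : Prop :=
  s ∈ eval φ M (fun _ => none) (fun _ => none)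

/-- Environments arising from binding sentences `ξX.ψ` (used for the
intermediate stages of evaluating an FOMC-sentence). -/
inductive GoodEnv : (ℕ → Option (GKM W P C → Set W)) → Prop where
  | nil : GoodEnv (fun _ => none)
  | cons {j : ℕ → Option (GKM W P C → Set W)} {X : ℕ} {ψ : Fm P C} :
      GoodEnv j → (Fm.xi X ψ).IsSentence →
      GoodEnv (Function.update j X (some (xiClosure ψ X j)))

/-- Bisimilarity of pointed genealogical Kripke models (Definition 4.2). -/
def Bisim (M : GKM W P C) (s : W) (N : GKM W P C) (t : W) : Prop :=
  ∃ (Z : W → W → Prop) (f : W → W → M.Idx → N.Idx → Prop),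
    Z s t ∧
    (∀ u v, Z u v → u ∈ M.S ∧ v ∈ N.S) ∧
    (∀ u v, Z u v → ∀ p : P, u ∈ M.V p ↔ v ∈ N.V p) ∧
    (∀ u v, Z u v → ∀ a : M.Idx, ∃ b : N.Idx, f u v a b) ∧
    (∀ u v, Z u v → ∀ b : N.Idx, ∃ a : M.Idx, f u v a b) ∧
    (∀ u v, Z u v → ∀ a b, f u v a b →
      Bisim (M.child a) (M.T u a) (N.child b) (N.T v b)) ∧
    (∀ u v, Z u v → ∀ c : C,
      (M.I u c = none ∧ N.I v c = none) ∨
      (∃ a b, M.I u c = some a ∧ N.I v c = some b ∧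
        Bisim (M.child a) (M.T u a) (N.child b) (N.T v b))) ∧
    (∀ u v, Z u v → ∀ u', M.R u u' →
      ∃ v', N.R v v' ∧ Z u' v' ∧ ∀ a b, f u v a b → f u' v' a b) ∧
    (∀ u v, Z u v → ∀ v', N.R v v' →
      ∃ u', M.R u u' ∧ Z u' v' ∧ ∀ a b, f u v a b → f u' v' a b)
termination_by M
decreasing_by all_goals exact Relation.TransGen.single ⟨_, rfl⟩

/-- The conditions of Definition 4.2 for a specific pair `(Z, f)` of witnesses. -/
def IsBisim (M N : GKM W P C) (Z : W → W → Prop)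
    (f : W → W → M.Idx → N.Idx → Prop) : Prop :=
  (∀ u v, Z u v → u ∈ M.S ∧ v ∈ N.S) ∧
  (∀ u v, Z u v → ∀ p : P, u ∈ M.V p ↔ v ∈ N.V p) ∧
  (∀ u v, Z u v → ∀ a : M.Idx, ∃ b : N.Idx, f u v a b) ∧
  (∀ u v, Z u v → ∀ b : N.Idx, ∃ a : M.Idx, f u v a b) ∧
  (∀ u v, Z u v → ∀ a b, f u v a b →
    Bisim (M.child a) (M.T u a) (N.child b) (N.T v b)) ∧
  (∀ u v, Z u v → ∀ c : C,
    (M.I u c = none ∧ N.I v c = none) ∨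
    (∃ a b, M.I u c = some a ∧ N.I v c = some b ∧
      Bisim (M.child a) (M.T u a) (N.child b) (N.T v b))) ∧
  (∀ u v, Z u v → ∀ u', M.R u u' →
    ∃ v', N.R v v' ∧ Z u' v' ∧ ∀ a b, f u v a b → f u' v' a b) ∧
  (∀ u v, Z u v → ∀ v', N.R v v' →
    ∃ u', M.R u u' ∧ Z u' v' ∧ ∀ a b, f u v a b → f u' v' a b)

/-- `n`-fold relational composition. -/
def relPow (r : W → W → Prop) : ℕ → W → W → Prop
  | 0 => fun a b => a = b
  | n + 1 => fun a c => ∃ b, relPow r n a b ∧ r b c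

/-- Standard Kripke semantics on the frame `(S_M, R_M)` with valuation `V_M`
(meaningful for pure propositional modal formulas). -/
def kEval (M : GKM W P C) : Fm P C → Set W
  | .top => M.S
  | .prop p => M.S ∩ M.V p
  | .neg φ => M.S \ kEval M φ
  | .and φ ψ => kEval M φ ∩ kEval M ψ
  | .box φ => {s | s ∈ M.S ∧ ∀ t, M.R s t → t ∈ kEval M φ}
  | _ => ∅

end GKM

/-- Pure propositional modal formulas. -/
def Fm.Pure {P C : Type} : Fm P C → Prop
  | .top => True
  | .prop _ => True
  | .neg φ => Pure φ
  | .and φ ψ => Pure φ ∧ Pure ψ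
  | .box φ => Pure φ
  | _ => False

namespace HM
open GKM Fm
variable {W P C : Type}

lemma eval_subset (φ : Fm P C) : ∀ (M : GKM W P C) (i) (j), GKM.eval φ M i j ⊆ M.S := by
  induction φ with
  | fvar X => intro M i j; rw [GKM.eval]; exact Set.inter_subset_left
  | top => intro M i j; rw [GKM.eval]
  | prop p => intro M i j; rw [GKM.eval]; exact Set.inter_subset_left
  | qmv φ x ih => intro M i j; rw [GKM.eval]; exact fun s hs => hs.1
  | qmc φ c ih => intro M i j; rw [GKM.eval]; exact fun s hs => hs.1
  | neg φ ih => intro M i j; rw [GKM.eval]; exact Set.diff_subset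
  | and φ ψ ih1 ih2 => intro M i j; rw [GKM.eval]; exact fun s hs => ih1 M i j hs.1
  | box φ ih => intro M i j; rw [GKM.eval]; exact fun s hs => hs.1
  | all x φ ih => intro M i j; rw [GKM.eval]; exact fun s hs => hs.1
  | xi X φ ih => intro M i j; rw [GKM.eval]; exact ih M i _

variable {M : GKM W P C} {i : ℕ → Option M.Idx} {j : ℕ → Option (GKM W P C → Set W)} {x : W}

lemma mem_top : x ∈ GKM.eval (.top) M i j ↔ x ∈ M.S := by rw [GKM.eval]

lemma mem_prop {p : P} : x ∈ GKM.eval (.prop p) M i j ↔ x ∈ M.S ∧ x ∈ M.V p := by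
  rw [GKM.eval]; rfl

lemma mem_neg {φ : Fm P C} : x ∈ GKM.eval (.neg φ) M i j ↔ x ∈ M.S ∧ x ∉ GKM.eval φ M i j := by
  rw [GKM.eval]; rfl

lemma mem_and {φ ψ : Fm P C} : x ∈ GKM.eval (.and φ ψ) M i j ↔ x ∈ GKM.eval φ M i j ∧ x ∈ GKM.eval ψ M i j := by
  rw [GKM.eval]; rfl

lemma mem_box {φ : Fm P C} : x ∈ GKM.eval (.box φ) M i j ↔ x ∈ M.S ∧ ∀ t, M.R x t → t ∈ GKM.eval φ M i j := by
  rw [GKM.eval]; rfl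

lemma mem_qmv {φ : Fm P C} {n : ℕ} : x ∈ GKM.eval (.qmv φ n) M i j ↔
    x ∈ M.S ∧ ∃ a, i n = some a ∧ M.T x a ∈ GKM.eval φ (M.child a) (fun _ => none) j := by
  rw [GKM.eval]; rfl

lemma mem_qmc {φ : Fm P C} {c : C} : x ∈ GKM.eval (.qmc φ c) M i j ↔
    x ∈ M.S ∧ ∃ a, M.I x c = some a ∧ M.T x a ∈ GKM.eval φ (M.child a) (fun _ => none) j := by
  rw [GKM.eval]; rfl

lemma mem_all {φ : Fm P C} {n : ℕ} : x ∈ GKM.eval (.all n φ) M i j ↔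
    x ∈ M.S ∧ ∀ a : M.Idx, x ∈ GKM.eval φ M (Function.update i n (some a)) j := by
  rw [GKM.eval]; rfl

lemma mem_dia {φ : Fm P C} : x ∈ GKM.eval (Fm.dia φ) M i j ↔
    x ∈ M.S ∧ ∃ t, M.R x t ∧ (t ∉ M.S ∨ t ∈ GKM.eval φ M i j) := by
  rw [Fm.dia, mem_neg, mem_box]
  constructor
  · rintro ⟨hx, h2⟩
    refine ⟨hx, ?_⟩
    by_contra hc
    push_neg at hc
    exact h2 ⟨hx, fun t ht => mem_neg.2 ⟨(hc t ht).1, (hc t ht).2⟩⟩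
  · rintro ⟨hx, t, ht, hor⟩
    refine ⟨hx, fun hc => ?_⟩
    have := hc.2 t ht
    rw [mem_neg] at this
    rcases hor with h1 | h1
    · exact h1 this.1
    · exact this.2 h1

lemma mem_exi {φ : Fm P C} {n : ℕ} : x ∈ GKM.eval (Fm.exi n φ) M i j ↔
    x ∈ M.S ∧ ∃ a : M.Idx, x ∈ GKM.eval φ M (Function.update i n (some a)) j := by
  rw [Fm.exi, mem_neg, mem_all]
  constructor
  · rintro ⟨hx, h2⟩
    refine ⟨hx, ?_⟩
    by_contra hc
    push_neg at hc
    exact h2 ⟨hx, fun a => mem_neg.2 ⟨hx, hc a⟩⟩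
  · rintro ⟨hx, a, ha⟩
    refine ⟨hx, fun hc => (mem_neg.1 (hc.2 a)).2 ha⟩

def conjL : List (Fm P C) → Fm P C
  | [] => .top
  | φ :: l => .and φ (conjL l)

lemma mem_conjL : ∀ (l : List (Fm P C)), x ∈ GKM.eval (conjL l) M i j ↔
    x ∈ M.S ∧ ∀ φ ∈ l, x ∈ GKM.eval φ M i j := by
  intro l
  induction l with
  | nil => simp [conjL, mem_top]
  | cons φ l ih =>
    rw [conjL, mem_and, ih]
    constructor
    · rintro ⟨h1, h2, h3⟩
      exact ⟨h2, by simpa using ⟨h1, h3⟩⟩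
    · rintro ⟨h1, h2⟩
      exact ⟨h2 φ (by simp), h1, fun ψ hψ => h2 ψ (by simp [hψ])⟩

lemma good_conjL {l : List (Fm P C)} (h : ∀ φ ∈ l, Fm.Good φ) : Fm.Good (conjL l) := by
  induction l with
  | nil => trivial
  | cons φ l ih =>
    exact ⟨h φ (by simp), ih fun ψ hψ => h ψ (by simp [hψ])⟩

lemma ffv_conjL {l : List (Fm P C)} (h : ∀ φ ∈ l, Fm.ffv φ = ∅) : Fm.ffv (conjL l) = ∅ := by
  induction l with
  | nil => simp [conjL, Fm.ffv, Fm.ffvOut, Fm.ffvIn]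
  | cons φ l ih =>
    have h1 := h φ (by simp)
    have h2 := ih fun ψ hψ => h ψ (by simp [hψ])
    simp only [Fm.ffv, Fm.ffvOut, Fm.ffvIn, conjL] at *
    rw [Finset.union_eq_empty] at h1 h2 ⊢
    simp [Finset.union_eq_empty, h1.1, h1.2, h2.1, h2.2]

lemma fmv_conjL {l : List (Fm P C)} {n : ℕ} (h : n ∈ Fm.fmv (conjL l)) : ∃ φ ∈ l, n ∈ Fm.fmv φ := by
  induction l with
  | nil => simp [conjL, Fm.fmv] at h
  | cons φ l ih =>
    simp only [conjL, Fm.fmv, Finset.mem_union] at h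
    rcases h with h | h
    · exact ⟨φ, by simp, h⟩
    · obtain ⟨ψ, h1, h2⟩ := ih h
      exact ⟨ψ, by simp [h1], h2⟩






/-- Tuple-equivalence of two pointed models relative to model-variable
environments `β`, `γ`. -/
def TE (M N : GKM W P C) (u v : W) (β : ℕ → Option M.Idx) (γ : ℕ → Option N.Idx) : Prop :=
  ∀ φ : Fm P C, Fm.Good φ → φ.ffv = ∅ → (∀ n ∈ φ.fmv, (β n).isSome) →
    (u ∈ GKM.eval φ M β (fun _ => none) ↔ v ∈ GKM.eval φ N γ (fun _ => none))

lemma TE.symm {M N : GKM W P C} {u v β γ} (h : TE M N u v β γ)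
    (hd : ∀ n, (β n).isSome ↔ (γ n).isSome) : TE N M v u γ β :=
  fun φ hg hf hm => (h φ hg hf (fun n hn => (hd n).2 (hm n hn))).symm

lemma fmv_neg {φ : Fm P C} : Fm.fmv (.neg φ) = Fm.fmv φ := rfl
lemma ffv_neg {φ : Fm P C} : Fm.ffv (.neg φ) = Fm.ffv φ := rfl
lemma good_neg {φ : Fm P C} (h : Fm.Good φ) : Fm.Good (.neg φ) := h

lemma fmv_exi {n : ℕ} {φ : Fm P C} : Fm.fmv (Fm.exi n φ) = Fm.fmv φ \ {n} := rfl
lemma ffv_exi {n : ℕ} {φ : Fm P C} : Fm.ffv (Fm.exi n φ) = Fm.ffv φ := rfl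
lemma good_exi {n : ℕ} {φ : Fm P C} (h : Fm.Good φ) : Fm.Good (Fm.exi n φ) := h

lemma fmv_dia {φ : Fm P C} : Fm.fmv (Fm.dia φ) = Fm.fmv φ := rfl
lemma ffv_dia {φ : Fm P C} : Fm.ffv (Fm.dia φ) = Fm.ffv φ := rfl
lemma good_dia {φ : Fm P C} (h : Fm.Good φ) : Fm.Good (Fm.dia φ) := h

/-- Orientation: from a failed equivalence extract a formula true on the left
and false on the right. -/
lemma orient {M N : GKM W P C} {u v : W} {β γ}
    (hu : u ∈ M.S)
    {φ : Fm P C} (hg : Fm.Good φ) (hf : φ.ffv = ∅) (hm : ∀ n ∈ φ.fmv, (β n).isSome)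
    (hne : ¬(u ∈ GKM.eval φ M β (fun _ => none) ↔ v ∈ GKM.eval φ N γ (fun _ => none))) :
    ∃ ψ : Fm P C, Fm.Good ψ ∧ ψ.ffv = ∅ ∧ (∀ n ∈ ψ.fmv, (β n).isSome) ∧
      u ∈ GKM.eval ψ M β (fun _ => none) ∧ v ∉ GKM.eval ψ N γ (fun _ => none) := by
  by_cases h1 : u ∈ GKM.eval φ M β (fun _ => none)
  · refine ⟨φ, hg, hf, hm, h1, fun h2 => hne ⟨fun _ => h2, fun _ => h1⟩⟩
  · have h2 : v ∈ GKM.eval φ N γ (fun _ => none) := by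
      by_contra h2
      exact hne ⟨fun h => absurd h h1, fun h => absurd h h2⟩
    exact ⟨.neg φ, good_neg hg, by rw [ffv_neg, hf], by rw [fmv_neg]; exact hm,
      mem_neg.2 ⟨hu, h1⟩, fun h => (mem_neg.1 h).2 h2⟩

/-- Extension: a fresh model variable interpreted on the left can be matched
on the right. -/
lemma extend_right {M N : GKM W P C} (hNfin : Finite N.Idx)
    (hMwf : M.WF) (hNwf : N.WF) {u v : W} {β γ}
    (hu : u ∈ M.S) (hv : v ∈ N.S) (hT : TE M N u v β γ)
    {n₀ : ℕ} (hn₀ : β n₀ = none) (a : M.Idx) :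
    ∃ b : N.Idx, TE M N u v (Function.update β n₀ (some a)) (Function.update γ n₀ (some b)) := by
  rw [GKM.WF] at hMwf hNwf
  cases isEmpty_or_nonempty N.Idx with
  | inl hemp =>
    exfalso
    -- `∃x.¿⊤?x` is true at `u` and false at `v`.
    have hχ : (u ∈ GKM.eval (Fm.exi n₀ (Fm.qmv .top n₀)) M β (fun _ => none) ↔
        v ∈ GKM.eval (Fm.exi n₀ (Fm.qmv .top n₀)) N γ (fun _ => none)) := by
      refine hT _ ?_ ?_ ?_
      · exact ⟨rfl, trivial⟩
      · rfl
      · intro n hn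
        rw [fmv_exi] at hn
        simp [Fm.fmv] at hn
    have hul : u ∈ GKM.eval (Fm.exi n₀ (Fm.qmv .top n₀)) M β (fun _ => none) := by
      refine mem_exi.2 ⟨hu, a, mem_qmv.2 ⟨hu, a, Function.update_self _ _ _, ?_⟩⟩
      rw [mem_top]
      exact hMwf.2.1 u hu a
    obtain ⟨-, b, -⟩ := mem_exi.1 (hχ.1 hul)
    exact hemp.false b
  | inr hne =>
    by_contra hc
    push_neg at hc
    have := Fintype.ofFinite N.Idx
    -- for each candidate `b` choose an oriented distinguishing formula
    have key : ∀ b : N.Idx, ∃ ψ : Fm P C, Fm.Good ψ ∧ ψ.ffv = ∅ ∧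
        (∀ n ∈ ψ.fmv, ((Function.update β n₀ (some a)) n).isSome) ∧
        u ∈ GKM.eval ψ M (Function.update β n₀ (some a)) (fun _ => none) ∧
        v ∉ GKM.eval ψ N (Function.update γ n₀ (some b)) (fun _ => none) := by
      intro b
      have hb := hc b
      rw [TE] at hb
      push_neg at hb
      obtain ⟨φ, hg, hf, hm, hne'⟩ := hb
      refine orient hu hg hf hm ?_
      rcases hne' with ⟨h1, h2⟩ | ⟨h1, h2⟩ <;> tauto
    choose F hF1 hF2 hF3 hF4 hF5 using key
    set L : List (Fm P C) := (Finset.univ : Finset N.Idx).toList.map F with hL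
    have hmem : ∀ b : N.Idx, F b ∈ L := by
      intro b; rw [hL]; exact List.mem_map.2 ⟨b, by simp, rfl⟩
    have hLmem : ∀ ψ ∈ L, ∃ b, ψ = F b := by
      intro ψ hψ
      rw [hL] at hψ
      obtain ⟨b, -, h⟩ := List.mem_map.1 hψ
      exact ⟨b, h.symm⟩
    set χ : Fm P C := Fm.exi n₀ (conjL L) with hχdef
    have hgood : Fm.Good χ := good_exi (good_conjL (by
      intro ψ hψ; obtain ⟨b, rfl⟩ := hLmem ψ hψ; exact hF1 b))
    have hffv : χ.ffv = ∅ := by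
      rw [hχdef, ffv_exi]
      exact ffv_conjL (by intro ψ hψ; obtain ⟨b, rfl⟩ := hLmem ψ hψ; exact hF2 b)
    have hfmv : ∀ n ∈ χ.fmv, (β n).isSome := by
      intro n hn
      rw [hχdef, fmv_exi, Finset.mem_sdiff] at hn
      obtain ⟨hn1, hn2⟩ := hn
      simp only [Finset.mem_singleton] at hn2
      obtain ⟨ψ, hψ, hnψ⟩ := fmv_conjL hn1
      obtain ⟨b, rfl⟩ := hLmem ψ hψ
      have := hF3 b n hnψ
      rwa [Function.update_of_ne hn2] at this
    have hul : u ∈ GKM.eval χ M β (fun _ => none) := by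
      refine mem_exi.2 ⟨hu, a, mem_conjL _ |>.2 ⟨hu, ?_⟩⟩
      intro ψ hψ
      obtain ⟨b, rfl⟩ := hLmem ψ hψ
      exact hF4 b
    have hvl := (hT χ hgood hffv hfmv).1 hul
    obtain ⟨-, b'', hb''⟩ := mem_exi.1 hvl
    have := (mem_conjL _ |>.1 hb'').2 (F b'') (hmem b'')
    exact hF5 b'' this

lemma ffv_qmv {φ : Fm P C} {n : ℕ} (h : φ.ffv = ∅) : (Fm.qmv φ n).ffv = ∅ := by
  simp only [Fm.ffv, Fm.ffvOut, Fm.ffvIn] at *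
  simpa using h

lemma ffv_qmc {φ : Fm P C} {c : C} (h : φ.ffv = ∅) : (Fm.qmc φ c).ffv = ∅ := by
  simp only [Fm.ffv, Fm.ffvOut, Fm.ffvIn] at *
  simpa using h

/-- The zig lemma: image-finiteness transfers `TE` along transitions. -/
lemma te_zig {M N : GKM W P C} (hNif : ∀ s ∈ N.S, {t | N.R s t}.Finite)
    (hMwf : M.WF) (hNwf : N.WF) {u v u' : W} {β γ}
    (hu : u ∈ M.S) (hv : v ∈ N.S) (hT : TE M N u v β γ) (hR : M.R u u') :
    ∃ v', N.R v v' ∧ TE M N u' v' β γ := by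
  rw [GKM.WF] at hMwf hNwf
  have hu' : u' ∈ M.S := (hMwf.1 u u' hR).2
  by_contra hc
  push_neg at hc
  have key : ∀ v', N.R v v' → ∃ ψ : Fm P C, Fm.Good ψ ∧ ψ.ffv = ∅ ∧
      (∀ n ∈ ψ.fmv, (β n).isSome) ∧
      u' ∈ GKM.eval ψ M β (fun _ => none) ∧ v' ∉ GKM.eval ψ N γ (fun _ => none) := by
    intro v' hv'
    have h := hc v' hv'
    rw [TE] at h
    push_neg at h
    obtain ⟨φ, hg, hf, hm, hne'⟩ := h
    refine orient hu' hg hf hm ?_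
    rcases hne' with ⟨h1, h2⟩ | ⟨h1, h2⟩ <;> tauto
  classical
  choose F hF1 hF2 hF3 hF4 hF5 using key
  have hfin := hNif v hv
  set G : W → Fm P C := fun w => if h : N.R v w then F w h else .top with hGdef
  have hG : ∀ w (h : N.R v w), G w = F w h := fun w h => dif_pos h
  set L : List (Fm P C) := hfin.toFinset.toList.map G with hL
  have hLmem : ∀ ψ ∈ L, ∃ w, ∃ h : N.R v w, ψ = F w h := by
    intro ψ hψ
    rw [hL] at hψ
    obtain ⟨w, hw, hh⟩ := List.mem_map.1 hψ
    have hRw : N.R v w := by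
      have := Finset.mem_toList.1 hw
      rwa [Set.Finite.mem_toFinset] at this
    exact ⟨w, hRw, by rw [← hh, hG w hRw]⟩
  have hmem : ∀ w (h : N.R v w), F w h ∈ L := by
    intro w h
    rw [hL]
    refine List.mem_map.2 ⟨w, ?_, hG w h⟩
    rw [Finset.mem_toList, Set.Finite.mem_toFinset]
    exact h
  set χ : Fm P C := Fm.dia (conjL L) with hχdef
  have hgood : Fm.Good χ := good_dia (good_conjL (by
    intro ψ hψ; obtain ⟨w, h, rfl⟩ := hLmem ψ hψ; exact hF1 w h))
  have hffv : χ.ffv = ∅ := by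
    rw [hχdef, ffv_dia]
    exact ffv_conjL (by intro ψ hψ; obtain ⟨w, h, rfl⟩ := hLmem ψ hψ; exact hF2 w h)
  have hfmv : ∀ n ∈ χ.fmv, (β n).isSome := by
    intro n hn
    rw [hχdef, fmv_dia] at hn
    obtain ⟨ψ, hψ, hnψ⟩ := fmv_conjL hn
    obtain ⟨w, h, rfl⟩ := hLmem ψ hψ
    exact hF3 w h n hnψ
  have hul : u ∈ GKM.eval χ M β (fun _ => none) := by
    refine mem_dia.2 ⟨hu, u', hR, Or.inr (mem_conjL _ |>.2 ⟨hu', ?_⟩)⟩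
    intro ψ hψ
    obtain ⟨w, h, rfl⟩ := hLmem ψ hψ
    exact hF4 w h
  have hvl := (hT χ hgood hffv hfmv).1 hul
  obtain ⟨-, v'', hRv'', hor⟩ := mem_dia.1 hvl
  have hv'' : v'' ∈ N.S := (hNwf.1 v v'' hRv'').2
  rcases hor with h | h
  · exact h hv''
  · exact hF5 v'' hRv'' ((mem_conjL _ |>.1 h).2 (F v'' hRv'') (hmem v'' hRv''))

lemma cover_right {M N : GKM W P C} (hNfin : Finite N.Idx) (hMwf : M.WF) (hNwf : N.WF)
    {u v : W} (hu : u ∈ M.S) (hv : v ∈ N.S) :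
    ∀ (l : List M.Idx) (β : ℕ → Option M.Idx) (γ : ℕ → Option N.Idx) (k : ℕ),
    TE M N u v β γ → (∀ n, (β n).isSome ↔ (γ n).isSome) → (∀ n, k ≤ n → β n = none) →
    ∃ (β' : ℕ → Option M.Idx) (γ' : ℕ → Option N.Idx) (k' : ℕ),
      TE M N u v β' γ' ∧ (∀ n, (β' n).isSome ↔ (γ' n).isSome) ∧ (∀ n, k' ≤ n → β' n = none) ∧
      (∀ n, n < k → β' n = β n ∧ γ' n = γ n) ∧
      (∀ a ∈ l, ∃ n, β' n = some a ∧ (γ' n).isSome) := by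
  intro l
  induction l with
  | nil =>
    intro β γ k h1 h2 h3
    exact ⟨β, γ, k, h1, h2, h3, fun n _ => ⟨rfl, rfl⟩, by simp⟩
  | cons a l ih =>
    intro β γ k h1 h2 h3
    obtain ⟨b, hb⟩ := extend_right hNfin hMwf hNwf hu hv h1 (h3 k le_rfl) a
    have hd1 : ∀ n, ((Function.update β k (some a)) n).isSome ↔
        ((Function.update γ k (some b)) n).isSome := by
      intro n
      by_cases hn : n = k
      · subst hn; simp
      · rw [Function.update_of_ne hn, Function.update_of_ne hn]; exact h2 n
    have hb1 : ∀ n, k + 1 ≤ n → (Function.update β k (some a)) n = none := by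
      intro n hn
      have hnk : n ≠ k := by omega
      rw [Function.update_of_ne hnk]
      exact h3 n (by omega)
    obtain ⟨β', γ', k', H1, H2, H3, H4, H5⟩ := ih _ _ (k + 1) hb hd1 hb1
    refine ⟨β', γ', k', H1, H2, H3, ?_, ?_⟩
    · intro n hn
      have h4 := H4 n (by omega)
      have hnk : n ≠ k := by omega
      rw [h4.1, h4.2, Function.update_of_ne hnk, Function.update_of_ne hnk]
      exact ⟨rfl, rfl⟩
    · intro a' ha'
      rcases List.mem_cons.1 ha' with rfl | ha'
      · have h4 := H4 k (by omega)
        refine ⟨k, ?_, ?_⟩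
        · rw [h4.1, Function.update_self]
        · rw [h4.2, Function.update_self]; rfl
      · exact H5 a' ha'

lemma cover_left {M N : GKM W P C} (hMfin : Finite M.Idx) (hMwf : M.WF) (hNwf : N.WF)
    {u v : W} (hu : u ∈ M.S) (hv : v ∈ N.S) :
    ∀ (l : List N.Idx) (β : ℕ → Option M.Idx) (γ : ℕ → Option N.Idx) (k : ℕ),
    TE M N u v β γ → (∀ n, (β n).isSome ↔ (γ n).isSome) → (∀ n, k ≤ n → β n = none) →
    ∃ (β' : ℕ → Option M.Idx) (γ' : ℕ → Option N.Idx) (k' : ℕ),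
      TE M N u v β' γ' ∧ (∀ n, (β' n).isSome ↔ (γ' n).isSome) ∧ (∀ n, k' ≤ n → β' n = none) ∧
      (∀ n, n < k → β' n = β n ∧ γ' n = γ n) ∧
      (∀ b ∈ l, ∃ n, (β' n).isSome ∧ γ' n = some b) := by
  intro l β γ k h1 h2 h3
  have h3' : ∀ n, k ≤ n → γ n = none := by
    intro n hn
    have h := h2 n
    rw [h3 n hn] at h
    cases hγ : γ n with
    | none => rfl
    | some x => exfalso; rw [hγ] at h; simp at h
  obtain ⟨γ', β', k', H1, H2, H3, H4, H5⟩ :=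
    cover_right hMfin hNwf hMwf hv hu l γ β k (h1.symm h2) (fun n => (h2 n).symm) h3'
  refine ⟨β', γ', k', H1.symm H2, fun n => (H2 n).symm, ?_,
    fun n hn => ⟨(H4 n hn).2, (H4 n hn).1⟩, fun b hb => ?_⟩
  · intro n hn
    have h := H2 n
    rw [H3 n hn] at h
    cases hβ : β' n with
    | none => rfl
    | some x => exfalso; rw [hβ] at h; simp at h
  · obtain ⟨n, hn1, hn2⟩ := H5 b hb
    exact ⟨n, hn2, hn1⟩

lemma te_of_sentences {M N : GKM W P C} {s t : W}
    (h : ∀ φ : Fm P C, φ.IsSentence → (GKM.Sat M s φ ↔ GKM.Sat N t φ)) :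
    TE M N s t (fun _ => none) (fun _ => none) := by
  intro φ hg hf hm
  have hfmv : φ.fmv = ∅ :=
    Finset.eq_empty_iff_forall_notMem.2 fun n hn => by simpa using hm n hn
  exact h φ ⟨hfmv, hf, hg⟩

/-- Main lemma: tuple-equivalent image-finite pointed models are bisimilar. -/
theorem main (M N : GKM W P C) (hM : M.ImageFinite) (hN : N.ImageFinite)
    (hMwf : M.WF) (hNwf : N.WF) (s t : W) (hs : s ∈ M.S) (ht : t ∈ N.S)
    (hTE : TE M N s t (fun _ => none) (fun _ => none)) : GKM.Bisim M s N t := by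
  have hMif := hM; rw [GKM.ImageFinite] at hMif
  have hNif := hN; rw [GKM.ImageFinite] at hNif
  have hMwf' := hMwf; rw [GKM.WF] at hMwf'
  have hNwf' := hNwf; rw [GKM.WF] at hNwf'
  have hMfin : Finite M.Idx := hMif.2.1
  have hNfin : Finite N.Idx := hNif.2.1
  have fM := Fintype.ofFinite M.Idx
  have fN := Fintype.ofFinite N.Idx
  obtain ⟨β1, γ1, k1, T1, D1, B1, -, C1⟩ :=
    cover_right hNfin hMwf hNwf hs ht (Finset.univ : Finset M.Idx).toList
      (fun _ => none) (fun _ => none) 0 hTE (by simp) (fun _ _ => rfl)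
  obtain ⟨β0, γ0, k0, T0, D0, B0, Pr0, C0⟩ :=
    cover_left hMfin hMwf hNwf hs ht (Finset.univ : Finset N.Idx).toList β1 γ1 k1 T1 D1 B1
  have CM : ∀ a : M.Idx, ∃ n, β0 n = some a ∧ (γ0 n).isSome := by
    intro a
    obtain ⟨n, h1a, h2a⟩ := C1 a (by simp)
    have hnk : n < k1 := by
      by_contra hcon
      rw [B1 n (by omega)] at h1a
      exact nomatch h1a
    have hpr := Pr0 n hnk
    exact ⟨n, by rw [hpr.1]; exact h1a, by rw [hpr.2]; exact h2a⟩
  have CN : ∀ b : N.Idx, ∃ n, (β0 n).isSome ∧ γ0 n = some b := fun b => C0 b (by simp)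
  -- the TE relation for children obtained from a shared variable slot
  have child_te : ∀ u v, u ∈ M.S → v ∈ N.S → TE M N u v β0 γ0 → ∀ n a b,
      β0 n = some a → γ0 n = some b →
      TE (M.child a) (N.child b) (M.T u a) (N.T v b) (fun _ => none) (fun _ => none) := by
    intro u v hu hv hT n a b hn1 hn2 φ hg hf hm
    have hfmv : φ.fmv = ∅ :=
      Finset.eq_empty_iff_forall_notMem.2 fun m hm' => by simpa using hm m hm'
    have hiff := hT (.qmv φ n) ⟨hfmv, hg⟩ (ffv_qmv hf) (by
      intro m hm'
      simp only [Fm.fmv, hfmv, Finset.mem_union, Finset.mem_singleton,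
        Finset.notMem_empty, false_or] at hm'
      subst hm'
      rw [hn1]; rfl)
    rw [mem_qmv, mem_qmv] at hiff
    constructor
    · intro hφ
      obtain ⟨-, b', hb', hφ'⟩ := hiff.1 ⟨hu, a, hn1, hφ⟩
      rw [hn2] at hb'
      cases hb'
      exact hφ'
    · intro hφ
      obtain ⟨-, a', ha', hφ'⟩ := hiff.2 ⟨hv, b, hn2, hφ⟩
      rw [hn1] at ha'
      cases ha'
      exact hφ'
  have child_tec : ∀ u v, u ∈ M.S → v ∈ N.S → TE M N u v β0 γ0 → ∀ (c : C) a b,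
      M.I u c = some a → N.I v c = some b →
      TE (M.child a) (N.child b) (M.T u a) (N.T v b) (fun _ => none) (fun _ => none) := by
    intro u v hu hv hT c a b hn1 hn2 φ hg hf hm
    have hfmv : φ.fmv = ∅ :=
      Finset.eq_empty_iff_forall_notMem.2 fun m hm' => by simpa using hm m hm'
    have hiff := hT (.qmc φ c) ⟨hfmv, hg⟩ (ffv_qmc hf) (by
      intro m hm'
      simp only [Fm.fmv, hfmv, Finset.notMem_empty] at hm')
    rw [mem_qmc, mem_qmc] at hiff
    constructor
    · intro hφ
      obtain ⟨-, b', hb', hφ'⟩ := hiff.1 ⟨hu, a, hn1, hφ⟩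
      rw [hn2] at hb'
      cases hb'
      exact hφ'
    · intro hφ
      obtain ⟨-, a', ha', hφ'⟩ := hiff.2 ⟨hv, b, hn2, hφ⟩
      rw [hn1] at ha'
      cases ha'
      exact hφ'
  rw [GKM.Bisim]
  refine ⟨fun u v => u ∈ M.S ∧ v ∈ N.S ∧ TE M N u v β0 γ0,
    fun _ _ a b => ∃ n, β0 n = some a ∧ γ0 n = some b,
    ⟨hs, ht, T0⟩, fun u v h => ⟨h.1, h.2.1⟩, ?_, ?_, ?_, ?_, ?_, ?_, ?_⟩
  · -- atomic harmony
    rintro u v ⟨hu, hv, hT⟩ p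
    have hiff := hT (.prop p) trivial (by simp [Fm.ffv, Fm.ffvOut, Fm.ffvIn])
      (by simp [Fm.fmv])
    rw [mem_prop, mem_prop] at hiff
    exact ⟨fun h' => (hiff.1 ⟨hu, h'⟩).2, fun h' => (hiff.2 ⟨hv, h'⟩).2⟩
  · -- totality
    rintro u v ⟨hu, hv, hT⟩ a
    obtain ⟨n, h1, h2⟩ := CM a
    obtain ⟨b, hb⟩ := Option.isSome_iff_exists.1 h2
    exact ⟨b, n, h1, hb⟩
  · -- surjectivity
    rintro u v ⟨hu, hv, hT⟩ b
    obtain ⟨n, h1, h2⟩ := CN b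
    obtain ⟨a, ha⟩ := Option.isSome_iff_exists.1 h1
    exact ⟨a, n, ha, h2⟩
  · -- matched children are bisimilar
    rintro u v ⟨hu, hv, hT⟩ a b ⟨n, hn1, hn2⟩
    exact main (M.child a) (N.child b) (hMif.2.2 a) (hNif.2.2 b) (hMwf'.2.2 a) (hNwf'.2.2 b)
      (M.T u a) (N.T v b) (hMwf'.2.1 u hu a) (hNwf'.2.1 v hv b)
      (child_te u v hu hv hT n a b hn1 hn2)
  · -- constants
    rintro u v ⟨hu, hv, hT⟩ c
    have hdet := hT (.qmc .top c) ⟨rfl, trivial⟩ (by simp [Fm.ffv, Fm.ffvOut, Fm.ffvIn])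
      (by simp [Fm.fmv])
    rw [mem_qmc, mem_qmc] at hdet
    cases hMc : M.I u c with
    | none =>
      cases hNc : N.I v c with
      | none => exact Or.inl ⟨rfl, rfl⟩
      | some b =>
        exfalso
        obtain ⟨-, a', ha', -⟩ := hdet.2 ⟨hv, b, hNc, mem_top.2 (hNwf'.2.1 v hv b)⟩
        rw [hMc] at ha'
        exact nomatch ha'
    | some a =>
      cases hNc : N.I v c with
      | none =>
        exfalso
        obtain ⟨-, b', hb', -⟩ := hdet.1 ⟨hu, a, hMc, mem_top.2 (hMwf'.2.1 u hu a)⟩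
        rw [hNc] at hb'
        exact nomatch hb'
      | some b =>
        refine Or.inr ⟨a, b, rfl, rfl, ?_⟩
        exact main (M.child a) (N.child b) (hMif.2.2 a) (hNif.2.2 b)
          (hMwf'.2.2 a) (hNwf'.2.2 b) (M.T u a) (N.T v b)
          (hMwf'.2.1 u hu a) (hNwf'.2.1 v hv b)
          (child_tec u v hu hv hT c a b hMc hNc)
  · -- zig
    rintro u v ⟨hu, hv, hT⟩ u' hR
    obtain ⟨v', hRv, hT'⟩ := te_zig hNif.1 hMwf hNwf hu hv hT hR
    exact ⟨v', hRv, ⟨(hMwf'.1 u u' hR).2, (hNwf'.1 v v' hRv).2, hT'⟩, fun a b hab => hab⟩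
  · -- zag
    rintro u v ⟨hu, hv, hT⟩ v' hRv
    obtain ⟨u', hRu, hT'⟩ := te_zig hMif.1 hNwf hMwf hv hu (hT.symm D0) hRv
    exact ⟨u', hRu, ⟨(hMwf'.1 u u' hRu).2, (hNwf'.1 v v' hRv).2,
      hT'.symm fun n => (D0 n).symm⟩, fun a b hab => hab⟩
termination_by M
decreasing_by all_goals exact Relation.TransGen.single ⟨_, rfl⟩
end HM


/-- Hennessy–Milner: image-finite pointed models satisfying the
same FOMC-sentences are bisimilar. -/
theorem stmt13 {W P C : Type} [Countable P] [Countable C]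
    (M N : GKM W P C) (hM : M.ImageFinite) (hN : N.ImageFinite)
    (hMwf : M.WF) (hNwf : N.WF) (s t : W) (hs : s ∈ M.S) (ht : t ∈ N.S)
    (h : ∀ φ : Fm P C, φ.IsSentence → (GKM.Sat M s φ ↔ GKM.Sat N t φ)) :
    GKM.Bisim M s N t :=
  HM.main M N hM hN hMwf hNwf s t hs ht (HM.te_of_sentences h)
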